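/- Let k ≥ 2 and q ≥ 3 be integers. Then for any integer a with 1 ≤ a ≤ q − 1 (not necessarily coprime to q), one has ζ⁻(k, a/q) ∈ V_k⁻(q), ζ⁺(k, a/q) ∈ V_k⁺(q), and ζ(k, a/q) ∈ V_k(q). -/

import Mathlib

open Finset

/-- The Hurwitz zeta value `ζ(k, x) = ∑_{m ≥ 0} 1/(m+x)^k`. -/
noncomputable def hzeta (k : ℕ) (x : ℝ) : ℝ := ∑' m : ℕ, 1 / ((m : ℝ) + x) ^ k

/-- The odd part `ζ⁻(k, a/q) = ζ(k, a/q) − (−1)^k ζ(k, 1 − a/q)`. -/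
noncomputable def zetaMinus (k a q : ℕ) : ℝ :=
  hzeta k ((a : ℝ) / q) - (-1 : ℝ) ^ k * hzeta k (1 - (a : ℝ) / q)

/-- The even part `ζ⁺(k, a/q) = ζ(k, a/q) + (−1)^k ζ(k, 1 − a/q)`. -/
noncomputable def zetaPlus (k a q : ℕ) : ℝ :=
  hzeta k ((a : ℝ) / q) + (-1 : ℝ) ^ k * hzeta k (1 - (a : ℝ) / q)

/-- `V_k⁻(q)` for `q ≥ 3`; for `q = 2` it is defined as `ℚ · ζ⁻(k, 1/2)`. -/
noncomputable def Vminus (k q : ℕ) : Submodule ℚ ℝ :=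
  if q = 2 then Submodule.span ℚ {zetaMinus k 1 2}
  else Submodule.span ℚ
    {x : ℝ | ∃ a : ℕ, 1 ≤ a ∧ 2 * a < q ∧ Nat.gcd a q = 1 ∧ x = zetaMinus k a q}

/-- `V_k⁺(q)` for `q ≥ 3`; for `q = 2` it is defined as `ℚ · ζ⁺(k, 1/2)`. -/
noncomputable def Vplus (k q : ℕ) : Submodule ℚ ℝ :=
  if q = 2 then Submodule.span ℚ {zetaPlus k 1 2}
  else Submodule.span ℚ
    {x : ℝ | ∃ a : ℕ, 1 ≤ a ∧ 2 * a < q ∧ Nat.gcd a q = 1 ∧ x = zetaPlus k a q}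

/-- `V_k(q)`, the ℚ-span of `ζ(k, a/q)` for `1 ≤ a < q` coprime to `q`
(for `q = 2` this gives `ℚ · ζ(k, 1/2)` as well). -/
noncomputable def Vfull (k q : ℕ) : Submodule ℚ ℝ :=
  Submodule.span ℚ
    {x : ℝ | ∃ a : ℕ, 1 ≤ a ∧ a < q ∧ Nat.gcd a q = 1 ∧ x = hzeta k ((a : ℝ) / q)}


lemma summable_hz (k : ℕ) (hk : 2 ≤ k) {x : ℝ} (hx : 0 < x) :
    Summable (fun m : ℕ => 1 / ((m : ℝ) + x) ^ k) := by
  rw [← summable_nat_add_iff 1]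
  have h1 : Summable (fun n : ℕ => 1 / ((n : ℝ))^k) := Real.summable_one_div_nat_pow.mpr hk
  have h2 := (summable_nat_add_iff 1).mpr h1
  refine h2.of_nonneg_of_le (fun n => by positivity) (fun n => ?_)
  have hb : (0:ℝ) < ((n+1 : ℕ) : ℝ) := by positivity
  gcongr
  · push_cast; linarith

lemma hzeta_distrib (k : ℕ) (hk : 2 ≤ k) (d : ℕ) (hd : 0 < d) {x : ℝ} (hx : 0 < x) :
    (d:ℝ)^k * hzeta k x = ∑ j ∈ Finset.range d, hzeta k ((x + j) / d) := by
  haveI : NeZero d := ⟨hd.ne'⟩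
  set f : ℕ → ℝ := fun n => 1 / ((n : ℝ) + x) ^ k with hf
  have hfs : Summable f := summable_hz k hk hx
  have hdR : (0:ℝ) < d := by exact_mod_cast hd
  have hinj : ∀ j : ℕ, Function.Injective (fun m : ℕ => m * d + j) := by
    intro j a b hab
    simp only at hab
    have h := Nat.add_right_cancel hab
    exact Nat.eq_of_mul_eq_mul_right hd h
  have key : ∀ j : ℕ, hzeta k ((x + j)/d) = (d:ℝ)^k * ∑' m : ℕ, f (m * d + j) := by
    intro j
    rw [hzeta, ← tsum_mul_left]
    congr 1; funext m
    have h1 : (m:ℝ) + (x + j)/d = (((m*d + j : ℕ) : ℝ) + x)/d := by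
      push_cast; field_simp; ring
    have h2 : (0:ℝ) < ((m*d+j : ℕ):ℝ) + x := by positivity
    simp only [hf]
    rw [h1, div_pow, one_div, inv_div, div_eq_mul_one_div, one_div]
  have hsum_each : ∀ j : ℕ, Summable (fun m => f (m * d + j)) := by
    intro j
    exact hfs.comp_injective (hinj j)
  have hfe : Summable (fun p : ℕ × Fin d => f (p.1 * d + (p.2:ℕ))) := by
    have h := ((Nat.divModEquiv d).symm.summable_iff (f := f)).mpr hfs
    simpa [Function.comp_def, Nat.divModEquiv] using h
  have h1 : ∑' p : ℕ × Fin d, f (p.1 * d + (p.2:ℕ)) = ∑' n, f n := by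
    have h := (Nat.divModEquiv d).symm.tsum_eq f
    simpa [Function.comp, Nat.divModEquiv] using h
  have h2 : ∀ m : ℕ, Summable (fun j : Fin d => f (m * d + (j:ℕ))) :=
    fun m => .of_finite
  have hmain : ∑ j ∈ Finset.range d, ∑' m : ℕ, f (m*d+j) = ∑' n, f n := by
    rw [← h1, hfe.tsum_prod' h2]
    rw [← Fin.sum_univ_eq_sum_range (fun j => ∑' m : ℕ, f (m*d+j))]
    rw [← Summable.tsum_finsetSum (fun (i : Fin d) _ => hsum_each (i:ℕ))]
    congr 1; funext m
    rw [tsum_fintype]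
  calc (d:ℝ)^k * hzeta k x = (d:ℝ)^k * ∑' n, f n := rfl
    _ = (d:ℝ)^k * ∑ j ∈ Finset.range d, ∑' m : ℕ, f (m*d+j) := by rw [hmain]
    _ = ∑ j ∈ Finset.range d, hzeta k ((x + j)/d) := by
        rw [Finset.mul_sum]; exact Finset.sum_congr rfl fun j _ => (key j).symm

lemma eps_distrib (k : ℕ) (hk : 2 ≤ k) (ε : ℝ) (d : ℕ) (hd : 0 < d) {x : ℝ}
    (hx : 0 < x) (hx1 : x < 1) :
    (d:ℝ)^k * (hzeta k x + ε * hzeta k (1-x)) =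
      ∑ j ∈ Finset.range d, (hzeta k ((x + (j:ℝ))/d) + ε * hzeta k (1 - (x + (j:ℝ))/d)) := by
  have hdR : (0:ℝ) < d := by exact_mod_cast hd
  have h1 := hzeta_distrib k hk d hd hx
  have h2 := hzeta_distrib k hk d hd (x := 1 - x) (by linarith)
  have h3 : ∑ j ∈ Finset.range d, hzeta k (1 - (x + (j:ℝ))/d)
      = ∑ j ∈ Finset.range d, hzeta k (((1-x) + (j:ℝ))/d) := by
    rw [← Finset.sum_range_reflect (fun j => hzeta k (((1-x) + (j:ℝ))/d)) d]
    refine Finset.sum_congr rfl fun j hj => ?_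
    have hj' := Finset.mem_range.mp hj
    congr 1
    have hc : ((d - 1 - j : ℕ) : ℝ) = (d:ℝ) - 1 - j := by
      have h : d - 1 - j = d - (1 + j) := by omega
      rw [h, Nat.cast_sub (by omega : 1 + j ≤ d)]
      push_cast
      ring
    rw [hc]
    field_simp
    ring
  rw [Finset.sum_add_distrib, ← Finset.mul_sum, h3, ← h2, ← h1]
  ring

lemma div_out (V : Submodule ℚ ℝ) (r : ℚ) (hr : r ≠ 0) (x : ℝ) (h : (r:ℝ) * x ∈ V) : x ∈ V := by
  have h2 := V.smul_mem r⁻¹ h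
  rwa [Rat.smul_def, Rat.cast_inv, inv_mul_cancel_left₀ (by exact_mod_cast hr)] at h2

lemma key_lemma (k q : ℕ) (hk : 2 ≤ k) (hq : 0 < q) (G : ℝ → ℝ) (V : Submodule ℚ ℝ)
    (hdist : ∀ d : ℕ, 0 < d → ∀ x : ℝ, 0 < x → x < 1 →
      (d:ℝ)^k * G x = ∑ j ∈ Finset.range d, G ((x + (j:ℝ))/d))
    (hgen : ∀ a : ℕ, 1 ≤ a → a < q → Nat.gcd a q = 1 → G ((a:ℝ)/q) ∈ V) :
    ∀ d q' a : ℕ, q' * d = q → 1 ≤ a → a < q' → Nat.gcd a q' = 1 → G ((a:ℝ)/q') ∈ V := by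
  intro d
  induction d using Nat.strong_induction_on with
  | _ d IH =>
  intro q' a hqq ha haq hcop
  rcases Nat.lt_or_ge d 2 with hd2 | hd2
  · interval_cases d
    · omega
    · have hq'q : q' = q := by omega
      subst hq'q
      exact hgen a ha haq hcop
  have hq' : 2 ≤ q' := by omega
  have hdq : 0 < d := by omega
  have hq'0 : 0 < q' := by omega
  have hq'R : (0:ℝ) < q' := by exact_mod_cast hq'0
  have hdR : (0:ℝ) < d := by exact_mod_cast hdq
  have hqR : ((q:ℝ)) = (q':ℝ) * d := by exact_mod_cast hqq.symm
  have expand : ∀ b : ℕ, 1 ≤ b → b < q' → Nat.gcd b q' = 1 →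
      (d:ℝ)^k * G ((b:ℝ)/q') = ∑ j ∈ Finset.range d, G (((b + j * q' : ℕ) : ℝ)/q) := by
    intro b hb hbq _
    have hx0 : (0:ℝ) < (b:ℝ)/q' := by
      apply div_pos _ hq'R; exact_mod_cast hb
    have hx1 : (b:ℝ)/q' < 1 := by
      rw [div_lt_one hq'R]; exact_mod_cast hbq
    rw [hdist d hdq _ hx0 hx1]
    refine Finset.sum_congr rfl fun j _ => ?_
    congr 1
    rw [hqR]; push_cast; field_simp
  have hblt : ∀ b j : ℕ, b < q' → j < d → b + j * q' < q := by
    intro b j hbq hj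
    calc b + j*q' < q' + j*q' := Nat.add_lt_add_right hbq _
      _ = (j+1) * q' := by ring
      _ ≤ d * q' := Nat.mul_le_mul_right _ hj
      _ = q := by rw [Nat.mul_comm]; exact hqq
  have memterm : ∀ b j : ℕ, 1 ≤ b → b < q' → Nat.gcd b q' = 1 → j < d →
      ¬ d ∣ (b + j * q') → G (((b + j * q' : ℕ) : ℝ)/q) ∈ V := by
    intro b j hb hbq hbc hj hnd
    set bj := b + j * q' with hbj
    have hbj1 : 1 ≤ bj := by omega
    have hbjq : bj < q := hblt b j hbq hj
    set g := Nat.gcd bj q with hg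
    have hg0 : 0 < g := Nat.gcd_pos_of_pos_left _ hbj1
    have hgq : g ∣ q := Nat.gcd_dvd_right _ _
    have hgb : g ∣ bj := Nat.gcd_dvd_left _ _
    have hcopbj : Nat.gcd bj q' = 1 := by
      rw [hbj, Nat.gcd_add_mul_right_left]; exact hbc
    have hgq' : Nat.Coprime g q' := Nat.Coprime.coprime_dvd_left hgb hcopbj
    have hgd : g ∣ d := hgq'.dvd_of_dvd_mul_left (hqq ▸ hgq)
    have hgltd : g < d := by
      rcases (Nat.le_of_dvd hdq hgd).lt_or_eq with h | h
      · exact h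
      · exact absurd (h ▸ hgb) hnd
    have happ := IH g hgltd (q / g) (bj / g) (Nat.div_mul_cancel hgq)
        ((Nat.one_le_div_iff hg0).mpr (Nat.le_of_dvd hbj1 hgb))
        (Nat.div_lt_div_of_lt_of_dvd hgq hbjq)
        (Nat.coprime_div_gcd_div_gcd hg0)
    have hgR : (0:ℝ) < (g:ℝ) := by exact_mod_cast hg0
    have h1 : ((bj/g : ℕ):ℝ) * g = bj := by exact_mod_cast Nat.div_mul_cancel hgb
    have h2 : ((q/g : ℕ):ℝ) * g = q := by exact_mod_cast Nat.div_mul_cancel hgq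
    have hcast : ((bj:ℝ))/q = ((bj/g : ℕ):ℝ)/((q/g : ℕ):ℝ) := by
      rw [← h1, ← h2, mul_div_mul_right _ _ hgR.ne']
    rw [hcast]; exact happ
  by_cases hco : Nat.Coprime d q'
  · -- coprime case: back edge, iterate
    haveI : NeZero q' := ⟨by omega⟩
    haveI : NeZero d := ⟨by omega⟩
    set σ : ℕ → ℕ := fun b => ((b : ZMod q') * ((d : ZMod q'))⁻¹).val with hσ
    have hstep : ∀ b : ℕ, 1 ≤ b → b < q' → Nat.gcd b q' = 1 →
        (1 ≤ σ b ∧ σ b < q' ∧ Nat.gcd (σ b) q' = 1) ∧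
          (d:ℝ)^k * G ((b:ℝ)/q') - G ((σ b : ℝ)/q') ∈ V := by
      intro b hb hbq hbc
      set j₀ : ℕ := ((-(b : ZMod d)) * ((q' : ZMod d))⁻¹).val with hj₀
      have hj₀d : j₀ < d := ZMod.val_lt _
      have hdvd : d ∣ b + j₀ * q' := by
        rw [← ZMod.natCast_eq_zero_iff]
        push_cast
        rw [hj₀, ZMod.natCast_zmod_val]
        have hu : (q' : ZMod d) * (q' : ZMod d)⁻¹ = 1 := ZMod.coe_mul_inv_eq_one q' hco.symm
        calc (b:ZMod d) + (-(b:ZMod d) * (q':ZMod d)⁻¹) * (q':ZMod d)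
            = (b:ZMod d) - (b:ZMod d) * ((q':ZMod d) * (q':ZMod d)⁻¹) := by ring
          _ = 0 := by rw [hu]; ring
      set c : ℕ := (b + j₀ * q') / d with hc
      have hcd : c * d = b + j₀ * q' := Nat.div_mul_cancel hdvd
      have hc1 : 1 ≤ c := by
        rcases Nat.eq_zero_or_pos c with h | h
        · rw [h] at hcd; omega
        · exact h
      have hbjlt : b + j₀ * q' < q := hblt b j₀ hbq hj₀d
      have hcq : c < q' := by
        by_contra h
        push_neg at h
        have h2 := Nat.mul_le_mul_right d h
        rw [hcd, hqq] at h2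
        omega
      have hccop : Nat.gcd c q' = 1 := by
        have h1 : Nat.gcd (b + j₀ * q') q' = 1 := by
          rw [Nat.gcd_add_mul_right_left]; exact hbc
        exact Nat.Coprime.coprime_dvd_left ⟨d, hcd.symm⟩ h1
      have hcast : (c : ZMod q') = (b : ZMod q') * ((d : ZMod q'))⁻¹ := by
        have h1 : (c : ZMod q') * (d : ZMod q') = (b : ZMod q') := by
          have h0 := congrArg (fun n : ℕ => (n : ZMod q')) hcd
          push_cast at h0
          rw [ZMod.natCast_self] at h0
          simpa using h0
        have hu : (d : ZMod q') * (d : ZMod q')⁻¹ = 1 := ZMod.coe_mul_inv_eq_one d hco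
        calc (c:ZMod q') = (c:ZMod q') * ((d:ZMod q') * (d:ZMod q')⁻¹) := by rw [hu, mul_one]
          _ = ((c:ZMod q') * (d:ZMod q')) * (d:ZMod q')⁻¹ := by ring
          _ = (b:ZMod q') * (d:ZMod q')⁻¹ := by rw [h1]
      have hσb : σ b = c := by
        rw [hσ]
        simp only
        rw [← hcast, ZMod.val_cast_of_lt hcq]
      have hexp := expand b hb hbq hbc
      have hj₀mem : j₀ ∈ Finset.range d := Finset.mem_range.mpr hj₀d
      rw [← Finset.sum_erase_add _ _ hj₀mem] at hexp
      have hGc : G (((b + j₀ * q' : ℕ):ℝ)/q) = G ((c:ℝ)/q') := by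
        congr 1
        rw [← hcd]
        push_cast
        rw [hqR, mul_div_mul_right _ _ hdR.ne']
      rw [hGc] at hexp
      refine ⟨by rw [hσb]; exact ⟨hc1, hcq, hccop⟩, ?_⟩
      rw [hσb]
      have heq2 : (d:ℝ)^k * G ((b:ℝ)/q') - G ((c:ℝ)/q')
          = ∑ j ∈ (Finset.range d).erase j₀, G (((b + j*q' : ℕ):ℝ)/q) := by
        rw [hexp]; ring
      rw [heq2]
      refine Submodule.sum_mem V fun j hj => ?_
      obtain ⟨hjne, hjr⟩ := Finset.mem_erase.mp hj
      refine memterm b j hb hbq hbc (Finset.mem_range.mp hjr) ?_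
      intro hdvd'
      apply hjne
      have hz1 : ((b : ZMod d) + (j:ZMod d) * (q':ZMod d)) = 0 := by
        have := (ZMod.natCast_eq_zero_iff (b + j*q') d).mpr hdvd'
        push_cast at this; exact this
      have hz2 : ((b : ZMod d) + (j₀:ZMod d) * (q':ZMod d)) = 0 := by
        have := (ZMod.natCast_eq_zero_iff (b + j₀*q') d).mpr hdvd
        push_cast at this; exact this
      have hu : (q' : ZMod d) * (q' : ZMod d)⁻¹ = 1 := ZMod.coe_mul_inv_eq_one q' hco.symm
      have hz3 : (j : ZMod d) = (j₀ : ZMod d) := by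
        have h4 : (j:ZMod d) * (q':ZMod d) = (j₀:ZMod d) * (q':ZMod d) := by
          have := hz1.trans hz2.symm
          linear_combination this
        calc (j:ZMod d) = (j:ZMod d) * ((q':ZMod d) * (q':ZMod d)⁻¹) := by rw [hu, mul_one]
          _ = ((j:ZMod d) * (q':ZMod d)) * (q':ZMod d)⁻¹ := by ring
          _ = ((j₀:ZMod d) * (q':ZMod d)) * (q':ZMod d)⁻¹ := by rw [h4]
          _ = (j₀:ZMod d) * ((q':ZMod d) * (q':ZMod d)⁻¹) := by ring
          _ = (j₀:ZMod d) := by rw [hu, mul_one]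
      calc j = ((j : ZMod d)).val := (ZMod.val_cast_of_lt (Finset.mem_range.mp hjr)).symm
        _ = ((j₀ : ZMod d)).val := by rw [hz3]
        _ = j₀ := ZMod.val_cast_of_lt hj₀d
    have hiter : ∀ t : ℕ, (1 ≤ σ^[t] a ∧ σ^[t] a < q' ∧ Nat.gcd (σ^[t] a) q' = 1) ∧
        ((d:ℝ)^k)^t * G ((a:ℝ)/q') - G (((σ^[t] a : ℕ):ℝ)/q') ∈ V := by
      intro t
      induction t with
      | zero => exact ⟨⟨ha, haq, hcop⟩, by simpa using V.zero_mem⟩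
      | succ t ih =>
        obtain ⟨⟨h1, h2, h3⟩, hmem⟩ := ih
        obtain ⟨⟨g1, g2, g3⟩, gmem⟩ := hstep _ h1 h2 h3
        rw [Function.iterate_succ_apply']
        refine ⟨⟨g1, g2, g3⟩, ?_⟩
        have heq : ((d:ℝ)^k)^(t+1) * G ((a:ℝ)/q') - G (((σ (σ^[t] a) : ℕ):ℝ)/q')
            = (d:ℝ)^k * (((d:ℝ)^k)^t * G ((a:ℝ)/q') - G (((σ^[t] a : ℕ):ℝ)/q'))
              + ((d:ℝ)^k * G (((σ^[t] a : ℕ):ℝ)/q') - G (((σ (σ^[t] a) : ℕ):ℝ)/q')) := by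
          ring
        rw [heq]
        refine V.add_mem ?_ gmem
        have h5 := V.smul_mem ((d:ℚ)^k) hmem
        rwa [Rat.smul_def, show (((d:ℚ)^k : ℚ) : ℝ) = (d:ℝ)^k by push_cast; ring] at h5
    have hfinal : ∀ s t : ℕ, s < t → σ^[s] a = σ^[t] a → G ((a:ℝ)/q') ∈ V := by
      intro s t hst hseq
      have m1 := (hiter s).2
      have m2 := (hiter t).2
      rw [hseq] at m1
      have hsub := V.sub_mem m2 m1
      rw [show ((d:ℝ)^k)^t * G ((a:ℝ)/q') - G (((σ^[t] a : ℕ):ℝ)/q')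
          - (((d:ℝ)^k)^s * G ((a:ℝ)/q') - G (((σ^[t] a : ℕ):ℝ)/q'))
          = (((d:ℝ)^k)^t - ((d:ℝ)^k)^s) * G ((a:ℝ)/q') from by ring] at hsub
      have hd1 : (1:ℚ) < (d:ℚ)^k := by
        have : (1:ℚ) < (d:ℚ) := by exact_mod_cast hd2
        calc (1:ℚ) = 1^k := (one_pow k).symm
          _ < (d:ℚ)^k := by
            apply pow_lt_pow_left₀ this (by norm_num)
            omega
      have hr0 : (((d:ℚ)^k)^t - ((d:ℚ)^k)^s) ≠ 0 := by
        have := pow_lt_pow_right₀ hd1 hst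
        exact sub_ne_zero.mpr this.ne'
      refine div_out V _ hr0 _ ?_
      rwa [show ((((d:ℚ)^k)^t - ((d:ℚ)^k)^s : ℚ) : ℝ) = ((d:ℝ)^k)^t - ((d:ℝ)^k)^s from by
        push_cast; ring]
    have hmaps : ∀ t ∈ Finset.range (q'+1), σ^[t] a ∈ Finset.range q' := fun t _ =>
      Finset.mem_range.mpr (hiter t).1.2.1
    obtain ⟨t1, ht1, t2, ht2, hne, heq⟩ :=
      Finset.exists_ne_map_eq_of_card_lt_of_maps_to (by simp) hmaps
    rcases hne.lt_or_gt with h | h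
    · exact hfinal t1 t2 h heq
    · exact hfinal t2 t1 h heq.symm
  · -- non-coprime case: no back edge
    have hall : ∀ j ∈ Finset.range d, G (((a + j*q' : ℕ):ℝ)/q) ∈ V := by
      intro j hj
      refine memterm a j ha haq hcop (Finset.mem_range.mp hj) ?_
      intro hdvd
      apply hco
      have hd1 : Nat.gcd d q' ∣ a + j * q' := (Nat.gcd_dvd_left d q').trans hdvd
      have hd2 : Nat.gcd d q' ∣ j * q' := Dvd.dvd.mul_left (Nat.gcd_dvd_right d q') j
      have hd3 : Nat.gcd d q' ∣ a := by
        have := Nat.dvd_sub hd1 hd2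
        simpa using this
      have hd4 := Nat.dvd_gcd hd3 (Nat.gcd_dvd_right d q')
      rw [hcop] at hd4
      exact Nat.dvd_one.mp hd4
    have hmem : (d:ℝ)^k * G ((a:ℝ)/q') ∈ V := by
      rw [expand a ha haq hcop]
      exact Submodule.sum_mem V hall
    refine div_out V ((d:ℚ)^k) (by positivity) _ ?_
    rwa [show (((d:ℚ)^k : ℚ) : ℝ) = (d:ℝ)^k from by push_cast; ring]

lemma reduced_mem (k q : ℕ) (hk : 2 ≤ k) (hq : 0 < q) (G : ℝ → ℝ) (V : Submodule ℚ ℝ)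
    (hdist : ∀ d : ℕ, 0 < d → ∀ x : ℝ, 0 < x → x < 1 →
      (d:ℝ)^k * G x = ∑ j ∈ Finset.range d, G ((x + (j:ℝ))/d))
    (hgen : ∀ a : ℕ, 1 ≤ a → a < q → Nat.gcd a q = 1 → G ((a:ℝ)/q) ∈ V) :
    ∀ a : ℕ, 1 ≤ a → a < q → G ((a:ℝ)/q) ∈ V := by
  intro a ha haq
  set g := Nat.gcd a q with hg
  have hg0 : 0 < g := Nat.gcd_pos_of_pos_left _ ha
  have hga : g ∣ a := Nat.gcd_dvd_left _ _
  have hgq : g ∣ q := Nat.gcd_dvd_right _ _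
  have hgR : (0:ℝ) < (g:ℝ) := by exact_mod_cast hg0
  have h1 : ((a/g : ℕ):ℝ) * g = a := by exact_mod_cast Nat.div_mul_cancel hga
  have h2 : ((q/g : ℕ):ℝ) * g = q := by exact_mod_cast Nat.div_mul_cancel hgq
  have hcast : ((a:ℝ))/q = ((a/g : ℕ):ℝ)/((q/g : ℕ):ℝ) := by
    rw [← h1, ← h2, mul_div_mul_right _ _ hgR.ne']
  rw [hcast]
  exact key_lemma k q hk hq G V hdist hgen g (q/g) (a/g) (Nat.div_mul_cancel hgq)
    ((Nat.one_le_div_iff hg0).mpr (Nat.le_of_dvd ha hga))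
    (Nat.div_lt_div_of_lt_of_dvd hgq haq)
    (Nat.coprime_div_gcd_div_gcd hg0)

lemma gcd_reflect {b q : ℕ} (hb : b < q) (h : Nat.gcd b q = 1) : Nat.gcd (q - b) q = 1 := by
  obtain ⟨c, rfl⟩ : ∃ c, q = b + c := ⟨q - b, by omega⟩
  have h2 : Nat.gcd b c = 1 := by
    rwa [show b + c = c + b from by omega, Nat.gcd_add_self_right] at h
  rw [show b + c - b = c from by omega]
  calc Nat.gcd c (b + c) = Nat.gcd c b := Nat.gcd_add_self_right c b
    _ = 1 := by rwa [Nat.gcd_comm]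

lemma neg_one_sq_pow (k : ℕ) : (-1:ℝ)^k * (-1:ℝ)^k = 1 := by
  rw [← pow_add, show k + k = 2*k from by ring, pow_mul, neg_one_sq, one_pow]


theorem stmt_9 (k q : ℕ) (hk : 2 ≤ k) (hq : 3 ≤ q) :
    ∀ a : ℕ, 1 ≤ a → a ≤ q - 1 →
      zetaMinus k a q ∈ Vminus k q ∧ zetaPlus k a q ∈ Vplus k q ∧
        hzeta k ((a : ℝ) / q) ∈ Vfull k q := by
  intro a ha1 ha2
  have haq : a < q := by omega
  have hq0 : 0 < q := by omega
  have hqR : (0:ℝ) < q := by exact_mod_cast hq0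
  refine ⟨?_, ?_, ?_⟩
  · -- Vminus
    set G : ℝ → ℝ := fun x => hzeta k x + (-(-1:ℝ)^k) * hzeta k (1-x) with hG
    have hGa : zetaMinus k a q = G ((a:ℝ)/q) := by
      simp only [hG, zetaMinus]; ring
    rw [hGa]
    refine reduced_mem k q hk hq0 G (Vminus k q)
      (fun d hd x hx hx1 => eps_distrib k hk _ d hd hx hx1) ?_ a ha1 haq
    intro b hb1 hb2 hb3
    rw [Vminus, if_neg (by omega)]
    rcases lt_trichotomy (2*b) q with h | h | h
    · apply Submodule.subset_span
      exact ⟨b, hb1, h, hb3, by simp only [hG, zetaMinus]; ring⟩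
    · exfalso
      have hbq : b ∣ q := ⟨2, by omega⟩
      have h4 := Nat.gcd_eq_left hbq
      rw [hb3] at h4
      omega
    · have hb2' : 1 ≤ q - b := by omega
      have hb2'' : 2 * (q - b) < q := by omega
      have hmem : zetaMinus k (q-b) q ∈ Submodule.span ℚ
          {x : ℝ | ∃ a : ℕ, 1 ≤ a ∧ 2 * a < q ∧ Nat.gcd a q = 1 ∧ x = zetaMinus k a q} :=
        Submodule.subset_span ⟨q - b, hb2', hb2'', gcd_reflect hb2 hb3, rfl⟩
      have e3 : ((q - b : ℕ):ℝ)/q = 1 - (b:ℝ)/q := by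
        rw [Nat.cast_sub (by omega : b ≤ q)]
        field_simp
      have hval : G ((b:ℝ)/q) = (-(-1:ℝ)^k) * zetaMinus k (q-b) q := by
        simp only [hG, zetaMinus]
        rw [e3, show 1 - (1 - (b:ℝ)/q) = (b:ℝ)/q from by ring]
        linear_combination (-(hzeta k ((b:ℝ)/q))) * neg_one_sq_pow k
      rw [hval]
      have h5 := Submodule.smul_mem _ (-(-1:ℚ)^k) hmem
      rwa [Rat.smul_def, show ((-(-1:ℚ)^k : ℚ) : ℝ) = -(-1:ℝ)^k from by push_cast; ring] at h5
  · -- Vplus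
    set G : ℝ → ℝ := fun x => hzeta k x + ((-1:ℝ)^k) * hzeta k (1-x) with hG
    have hGa : zetaPlus k a q = G ((a:ℝ)/q) := by
      simp only [hG, zetaPlus]; try ring
    rw [hGa]
    refine reduced_mem k q hk hq0 G (Vplus k q)
      (fun d hd x hx hx1 => eps_distrib k hk _ d hd hx hx1) ?_ a ha1 haq
    intro b hb1 hb2 hb3
    rw [Vplus, if_neg (by omega)]
    rcases lt_trichotomy (2*b) q with h | h | h
    · apply Submodule.subset_span
      exact ⟨b, hb1, h, hb3, by simp only [hG, zetaPlus]; try ring⟩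
    · exfalso
      have hbq : b ∣ q := ⟨2, by omega⟩
      have h4 := Nat.gcd_eq_left hbq
      rw [hb3] at h4
      omega
    · have hb2' : 1 ≤ q - b := by omega
      have hb2'' : 2 * (q - b) < q := by omega
      have hmem : zetaPlus k (q-b) q ∈ Submodule.span ℚ
          {x : ℝ | ∃ a : ℕ, 1 ≤ a ∧ 2 * a < q ∧ Nat.gcd a q = 1 ∧ x = zetaPlus k a q} :=
        Submodule.subset_span ⟨q - b, hb2', hb2'', gcd_reflect hb2 hb3, rfl⟩
      have e3 : ((q - b : ℕ):ℝ)/q = 1 - (b:ℝ)/q := by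
        rw [Nat.cast_sub (by omega : b ≤ q)]
        field_simp
      have hval : G ((b:ℝ)/q) = ((-1:ℝ)^k) * zetaPlus k (q-b) q := by
        simp only [hG, zetaPlus]
        rw [e3, show 1 - (1 - (b:ℝ)/q) = (b:ℝ)/q from by ring]
        linear_combination (-(hzeta k ((b:ℝ)/q))) * neg_one_sq_pow k
      rw [hval]
      have h5 := Submodule.smul_mem _ ((-1:ℚ)^k) hmem
      rwa [Rat.smul_def, show (((-1:ℚ)^k : ℚ) : ℝ) = (-1:ℝ)^k from by push_cast; ring] at h5
  · -- Vfull
    refine reduced_mem k q hk hq0 (hzeta k) (Vfull k q)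
      (fun d hd x hx hx1 => hzeta_distrib k hk d hd hx) ?_ a ha1 haq
    intro b hb1 hb2 hb3
    rw [Vfull]
    exact Submodule.subset_span ⟨b, hb1, hb2, hb3, rfl⟩
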